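/- For every C ≥ 1 there exist constants L ≥ 0 and c > 0, depending only on C, with the following property: if X is a metric space homeomorphic to the unit circle S¹ ⊆ ℝ² which has bounded turning with constant C, then, setting r = c·diam X, there exists an L-Lipschitz map μ : Δ_r(X²) → X such that μ(a,b) = μ(b,a) and μ(a,a) = a for all (a,b) ∈ Δ_r(X²). (One may take c = 1/(9C).) -/

import Mathlib

open Set Metric

set_option linter.unusedSectionVars false
set_option maxHeartbeats 1600000



noncomputable def tauFn {X : Type} [MetricSpace X] (p : ℝ → X) (u : ℝ) (x : X) : ℝ :=
  Classical.epsilon fun t => t ∈ Set.Ioo u (u+1) ∧ p t = x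

section helpers

variable {X : Type} [MetricSpace X] {p : ℝ → X}

lemma exists_lift (hinj : ∀ s t : ℝ, p s = p t ↔ ∃ n : ℤ, s = t + n)
    (hsurj : Function.Surjective p) (u : ℝ) (x : X) (hx : x ≠ p u) :
    ∃ t, t ∈ Set.Ioo u (u+1) ∧ p t = x := by
  obtain ⟨s, hs⟩ := hsurj x
  set t := u + Int.fract (s - u) with htdef
  have hf := Int.floor_add_fract (s - u)
  have h0 : (0:ℝ) ≤ Int.fract (s - u) := Int.fract_nonneg _
  have hl : Int.fract (s - u) < 1 := Int.fract_lt_one _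
  have hpt : p t = x := by
    rw [← hs, hinj]
    exact ⟨-⌊s - u⌋, by push_cast; linarith⟩
  have htu : t ≠ u := by
    intro h
    exact hx (by rw [← hpt, h])
  have : u < t := lt_of_le_of_ne (by linarith) (Ne.symm htu)
  exact ⟨t, ⟨this, by linarith⟩, hpt⟩

lemma lift_unique (hinj : ∀ s t : ℝ, p s = p t ↔ ∃ n : ℤ, s = t + n)
    {u s t : ℝ} (hs : s ∈ Set.Ioo u (u+1)) (ht : t ∈ Set.Ioo u (u+1))
    (h : p s = p t) : s = t := by
  obtain ⟨n, hn⟩ := (hinj s t).mp h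
  have h1 : (-1 : ℝ) < (n : ℝ) := by
    have := hs.1; have := ht.2; linarith
  have h2 : (n : ℝ) < 1 := by
    have := hs.2; have := ht.1; linarith
  have h1' : (-1 : ℤ) < n := by exact_mod_cast h1
  have h2' : n < 1 := by exact_mod_cast h2
  have : n = 0 := by omega
  rw [this] at hn; push_cast at hn; linarith

lemma tau_spec (hinj : ∀ s t : ℝ, p s = p t ↔ ∃ n : ℤ, s = t + n)
    (hsurj : Function.Surjective p) (u : ℝ) (x : X) (hx : x ≠ p u) :
    tauFn p u x ∈ Set.Ioo u (u+1) ∧ p (tauFn p u x) = x :=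
  Classical.epsilon_spec (exists_lift hinj hsurj u x hx)

/-- Lifts of connected sets avoiding `p u` are order-convex in the window `(u,u+1)`. -/
lemma circle_between (hp : Continuous p)
    (hinj : ∀ s t : ℝ, p s = p t ↔ ∃ n : ℤ, s = t + n)
    (hsurj : Function.Surjective p)
    {K : Set X} (hK : IsPreconnected K)
    {u t1 t2 t3 : ℝ} (h1 : t1 ∈ Set.Ioo u (u+1)) (h3 : t3 ∈ Set.Ioo u (u+1))
    (h12 : t1 ≤ t2) (h23 : t2 ≤ t3)
    (hw : p u ∉ K) (m1 : p t1 ∈ K) (m3 : p t3 ∈ K) : p t2 ∈ K := by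
  rcases eq_or_lt_of_le h12 with rfl|h12'
  · exact m1
  rcases eq_or_lt_of_le h23 with rfl|h23'
  · exact m3
  by_contra ht2
  set F1 : Set X := p '' Set.Icc u t2 with hF1
  set F2 : Set X := p '' Set.Icc t2 (u+1) with hF2
  have hcF1 : IsClosed F1 := (isCompact_Icc.image hp).isClosed
  have hcF2 : IsClosed F2 := (isCompact_Icc.image hp).isClosed
  have hu2 : u < t2 := lt_trans h1.1 h12'
  have h2u : t2 < u + 1 := lt_trans h23' h3.2
  have hunion : F1 ∪ F2 = Set.univ := by
    apply Set.eq_univ_iff_forall.mpr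
    intro x
    obtain ⟨s, hs⟩ := hsurj x
    set t := u + Int.fract (s - u) with htdef
    have hf := Int.floor_add_fract (s - u)
    have h0 : (0:ℝ) ≤ Int.fract (s - u) := Int.fract_nonneg _
    have hl : Int.fract (s - u) < 1 := Int.fract_lt_one _
    have hpt : p t = x := by
      rw [← hs, hinj]
      exact ⟨-⌊s - u⌋, by push_cast; linarith⟩
    rcases le_total t t2 with h|h
    · exact Or.inl ⟨t, ⟨by linarith, h⟩, hpt⟩
    · exact Or.inr ⟨t, ⟨h, by linarith⟩, hpt⟩
  have hKF : ∀ z, z ∈ F1 → z ∈ F2 → z ∉ K := by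
    rintro z ⟨s, hsI, hsp⟩ ⟨s', hs'I, hs'p⟩
    obtain ⟨n, hn⟩ := (hinj s s').mp (hsp.trans hs'p.symm)
    have hb1 : (-1:ℝ) ≤ (n:ℝ) := by
      have := hsI.1; have := hs'I.2; linarith
    have hb2 : (n:ℝ) ≤ 0 := by
      have := hsI.2; have := hs'I.1; linarith
    have hb1' : (-1:ℤ) ≤ n := by exact_mod_cast hb1
    have hb2' : n ≤ 0 := by exact_mod_cast hb2
    interval_cases n
    · -- n = -1 : s = s' - 1 ≤ u, so s = u
      push_cast at hn
      have hsu : s = u := le_antisymm (by linarith [hs'I.2]) hsI.1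
      rw [← hsp, hsu]; exact hw
    · -- n = 0 : s = s' = t2
      push_cast at hn
      have : s = t2 := le_antisymm hsI.2 (by linarith [hs'I.1])
      rw [← hsp, this]; exact ht2
  have hpt1 : p t1 ∉ F2 := by
    rintro ⟨s', hs'I, hs'p⟩
    obtain ⟨n, hn⟩ := (hinj s' t1).mp hs'p
    have hb1 : (0:ℝ) < (n:ℝ) := by have := hs'I.1; linarith
    have hb2 : (n:ℝ) < 1 := by have := hs'I.2; have := h1.1; linarith
    have hb1' : (0:ℤ) < n := by exact_mod_cast hb1
    have hb2' : n < 1 := by exact_mod_cast hb2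
    omega
  have hpt3 : p t3 ∉ F1 := by
    rintro ⟨s, hsI, hsp⟩
    obtain ⟨n, hn⟩ := (hinj s t3).mp hsp
    have hb1 : (-1:ℝ) < (n:ℝ) := by have := hsI.1; have := h3.2; linarith
    have hb2 : (n:ℝ) < 0 := by have := hsI.2; linarith
    have hb1' : (-1:ℤ) < n := by exact_mod_cast hb1
    have hb2' : n < 0 := by exact_mod_cast hb2
    omega
  have hsub : K ⊆ F1ᶜ ∪ F2ᶜ := by
    intro z hz
    by_cases h : z ∈ F1
    · exact Or.inr (fun h2 => hKF z h h2 hz)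
    · exact Or.inl h
  have hdisj : Disjoint F1ᶜ F2ᶜ := by
    rw [Set.disjoint_left]
    intro x hx1 hx2
    have : x ∈ F1 ∪ F2 := hunion ▸ Set.mem_univ x
    rcases this with h|h
    · exact hx1 h
    · exact hx2 h
  have hKsub : K ⊆ F1ᶜ :=
    IsPreconnected.subset_left_of_subset_union hcF1.isOpen_compl hcF2.isOpen_compl
      hdisj hsub ⟨p t3, m3, hpt3⟩ hK
  exact (hKsub m1) ⟨t1, ⟨le_of_lt h1.1, le_of_lt h12'⟩, rfl⟩

/-- The order of the lifts of two points of a connected set avoiding the window base points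
does not depend on the choice of window. -/
lemma circle_order_transfer (hp : Continuous p)
    (hinj : ∀ s t : ℝ, p s = p t ↔ ∃ n : ℤ, s = t + n)
    (hsurj : Function.Surjective p)
    {K : Set X} (hK : IsPreconnected K) {u u' : ℝ}
    (hw : p u ∉ K) (hw' : p u' ∉ K)
    {a b : X} (ha : a ∈ K) (hb : b ∈ K) :
    (tauFn p u a < tauFn p u b ↔ tauFn p u' a < tauFn p u' b) := by
  have hau : a ≠ p u := fun h => hw (h ▸ ha)
  have hbu : b ≠ p u := fun h => hw (h ▸ hb)
  have hau' : a ≠ p u' := fun h => hw' (h ▸ ha)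
  have hbu' : b ≠ p u' := fun h => hw' (h ▸ hb)
  obtain ⟨hsaI, hsap⟩ := tau_spec hinj hsurj u a hau
  obtain ⟨hsbI, hsbp⟩ := tau_spec hinj hsurj u b hbu
  obtain ⟨hsaI', hsap'⟩ := tau_spec hinj hsurj u' a hau'
  obtain ⟨hsbI', hsbp'⟩ := tau_spec hinj hsurj u' b hbu'
  set sa := tauFn p u a
  set sb := tauFn p u b
  set sa' := tauFn p u' a
  set sb' := tauFn p u' b
  obtain ⟨na, hna⟩ := (hinj sa' sa).mp (by rw [hsap', hsap])
  obtain ⟨nb, hnb⟩ := (hinj sb' sb).mp (by rw [hsbp', hsbp])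
  by_cases huu : p u' = p u
  · obtain ⟨m, hm⟩ := (hinj u' u).mp huu
    have hma : sa' = sa + m := by
      refine lift_unique hinj hsaI' ⟨by rw [hm]; linarith [hsaI.1], by rw [hm]; linarith [hsaI.2]⟩ ?_
      have hpm : p (sa + (m:ℝ)) = p sa := (hinj _ _).mpr ⟨m, rfl⟩
      rw [hsap', hpm, hsap]
    have hmb : sb' = sb + m := by
      refine lift_unique hinj hsbI' ⟨by rw [hm]; linarith [hsbI.1], by rw [hm]; linarith [hsbI.2]⟩ ?_
      have hpm : p (sb + (m:ℝ)) = p sb := (hinj _ _).mpr ⟨m, rfl⟩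
      rw [hsbp', hpm, hsbp]
    rw [hma, hmb]
    constructor <;> intro h <;> linarith
  · obtain ⟨v, hvI, hvp⟩ := exists_lift hinj hsurj u (p u') huu
    obtain ⟨k, hk⟩ := (hinj u' v).mp (by rw [hvp])
    have hIa : sa + ((na - k : ℤ) : ℝ) ∈ Set.Ioo v (v + 1) := by
      have h1 := hsaI'.1; have h2 := hsaI'.2
      rw [hk] at h1 h2
      constructor <;> [skip; skip] <;> push_cast <;> push_cast at h1 h2 <;> linarith [hna]
    have hIb : sb + ((nb - k : ℤ) : ℝ) ∈ Set.Ioo v (v + 1) := by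
      have h1 := hsbI'.1; have h2 := hsbI'.2
      rw [hk] at h1 h2
      constructor <;> [skip; skip] <;> push_cast <;> push_cast at h1 h2 <;> linarith [hnb]
    have hca : na - k = 0 ∨ na - k = 1 := by
      have h1 : (-1 : ℝ) < ((na - k : ℤ) : ℝ) := by
        have := hIa.1; have := hsaI.2; have := hvI.1; linarith
      have h2 : ((na - k : ℤ) : ℝ) < 2 := by
        have := hIa.2; have := hsaI.1; have := hvI.2; linarith
      have h1' : (-1 : ℤ) < na - k := by exact_mod_cast h1
      have h2' : na - k < 2 := by exact_mod_cast h2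
      omega
    have hcb : nb - k = 0 ∨ nb - k = 1 := by
      have h1 : (-1 : ℝ) < ((nb - k : ℤ) : ℝ) := by
        have := hIb.1; have := hsbI.2; have := hvI.1; linarith
      have h2 : ((nb - k : ℤ) : ℝ) < 2 := by
        have := hIb.2; have := hsbI.1; have := hvI.2; linarith
      have h1' : (-1 : ℤ) < nb - k := by exact_mod_cast h1
      have h2' : nb - k < 2 := by exact_mod_cast h2
      omega
    rcases hca with hca|hca <;> rcases hcb with hcb|hcb
    · -- equal: na = nb
      have : na = nb := by omega
      rw [this] at hna
      rw [hna, hnb]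
      constructor <;> intro h <;> linarith
    · -- na - k = 0, nb - k = 1 : v < sa, sb < v : contradiction
      exfalso
      have hvsa : v < sa := by
        have := hIa.1; rw [hca] at this; push_cast at this; linarith
      have hsbv : sb < v := by
        have := hIb.2; rw [hcb] at this; push_cast at this; linarith
      have := circle_between hp hinj hsurj hK hsbI hsaI (le_of_lt hsbv) (le_of_lt hvsa)
        hw (hsbp ▸ hb) (hsap ▸ ha)
      rw [hvp] at this
      exact hw' this
    · -- na - k = 1, nb - k = 0 : sa < v < sb
      exfalso
      have hsav : sa < v := by
        have := hIa.2; rw [hca] at this; push_cast at this; linarith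
      have hvsb : v < sb := by
        have := hIb.1; rw [hcb] at this; push_cast at this; linarith
      have := circle_between hp hinj hsurj hK hsaI hsbI (le_of_lt hsav) (le_of_lt hvsb)
        hw (hsap ▸ ha) (hsbp ▸ hb)
      rw [hvp] at this
      exact hw' this
    · have : na = nb := by omega
      rw [this] at hna
      rw [hna, hnb]
      constructor <;> intro h <;> linarith


end helpers


lemma exists_cover {X : Type} [MetricSpace X]
    (γ : X ≃ₜ Metric.sphere (0 : EuclideanSpace ℝ (Fin 2)) 1) :
    ∃ p : ℝ → X, Continuous p ∧ (∀ s t : ℝ, p s = p t ↔ ∃ n : ℤ, s = t + n) ∧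
      Function.Surjective p := by
  classical
  set li := Complex.orthonormalBasisOneI.repr with hli
  have hlin : ∀ z : ℂ, ‖li z‖ = ‖z‖ := fun z => li.norm_map z
  have hmem : ∀ t : ℝ, li (Complex.exp ((2*Real.pi*t : ℝ) * Complex.I)) ∈
      Metric.sphere (0 : EuclideanSpace ℝ (Fin 2)) 1 := by
    intro t
    rw [mem_sphere_iff_norm, sub_zero, hlin]
    exact Complex.norm_exp_ofReal_mul_I _
  set p : ℝ → X := fun t => γ.symm ⟨li (Complex.exp ((2*Real.pi*t : ℝ) * Complex.I)), hmem t⟩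
    with hpdef
  have hexp_iff : ∀ s t : ℝ, Complex.exp ((2*Real.pi*s : ℝ) * Complex.I)
      = Complex.exp ((2*Real.pi*t : ℝ) * Complex.I) ↔ ∃ n : ℤ, s = t + n := by
    intro s t
    rw [Complex.exp_eq_exp_iff_exists_int]
    constructor
    · rintro ⟨n, hn⟩
      refine ⟨n, ?_⟩
      have hn' : ((s:ℂ)) * (2*(Real.pi:ℂ)*Complex.I) = ((t:ℂ) + (n:ℂ)) * (2*(Real.pi:ℂ)*Complex.I) := by
        push_cast at hn ⊢
        linear_combination hn
      have hne : (2*(Real.pi:ℂ)*Complex.I) ≠ 0 := by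
        simp [Complex.I_ne_zero, Real.pi_ne_zero]
      have := mul_right_cancel₀ hne hn'
      exact_mod_cast this
    · rintro ⟨n, rfl⟩
      exact ⟨n, by push_cast; ring⟩
  refine ⟨p, ?_, ?_, ?_⟩
  · apply γ.symm.continuous.comp
    apply Continuous.subtype_mk
    exact li.continuous.comp (Complex.continuous_exp.comp (by fun_prop))
  · intro s t
    rw [hpdef]
    simp only
    rw [← hexp_iff s t]
    constructor
    · intro h
      have h2 := γ.symm.injective h
      have h3 := congrArg Subtype.val h2
      exact li.injective h3
    · intro h
      congr 1
      exact Subtype.ext (congrArg li h)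
  · intro x
    set z : ℂ := li.symm ((γ x : EuclideanSpace ℝ (Fin 2))) with hz
    have hzabs : ‖z‖ = 1 := by
      rw [hz, li.symm.norm_map]
      have := (γ x).2
      rw [mem_sphere_iff_norm, sub_zero] at this
      exact this
    refine ⟨z.arg / (2*Real.pi), ?_⟩
    have hπ : (2*Real.pi) ≠ 0 := by positivity
    have harg : (2*Real.pi*(z.arg / (2*Real.pi)) : ℝ) = z.arg := by field_simp
    have hexp : Complex.exp ((2*Real.pi*(z.arg / (2*Real.pi)) : ℝ) * Complex.I) = z := by
      rw [harg]
      have := Complex.norm_mul_exp_arg_mul_I z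
      rw [hzabs] at this
      simpa using this
    rw [hpdef]
    simp only
    have : li (Complex.exp ((2*Real.pi*(z.arg / (2*Real.pi)) : ℝ) * Complex.I))
        = (γ x : EuclideanSpace ℝ (Fin 2)) := by
      rw [hexp, hz, li.apply_symm_apply]
    have hsub : (⟨li (Complex.exp ((2*Real.pi*(z.arg / (2*Real.pi)) : ℝ) * Complex.I)),
        hmem _⟩ : Metric.sphere (0 : EuclideanSpace ℝ (Fin 2)) 1) = γ x := Subtype.ext this
    rw [hsub, γ.symm_apply_apply]


theorem metric_circle_bounded_turning_local_lipschitz_mean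
    (C : ℝ) (hC : 1 ≤ C) :
    ∃ L : ℝ, 0 ≤ L ∧ ∃ c : ℝ, 0 < c ∧
      ∀ (X : Type) [MetricSpace X],
        Nonempty (X ≃ₜ Metric.sphere (0 : EuclideanSpace ℝ (Fin 2)) 1) →
        (∀ a b : X, ∃ E : Set X, a ∈ E ∧ b ∈ E ∧ IsCompact E ∧ IsConnected E ∧
          Metric.diam E ≤ C * dist a b) →
        ∃ μ : X → X → X,
          (∀ a b : X, dist a b ≤ c * Metric.diam (Set.univ : Set X) → μ a b = μ b a) ∧
          (∀ a : X, μ a a = a) ∧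
          (∀ a b a' b' : X,
            dist a b ≤ c * Metric.diam (Set.univ : Set X) →
            dist a' b' ≤ c * Metric.diam (Set.univ : Set X) →
            dist (μ a b) (μ a' b') ≤ L * (dist a a' + dist b b')) := by
  classical
  have hCpos : 0 < C := lt_of_lt_of_le one_pos hC
  refine ⟨2*C+5, by linarith, 1/(9*C), by positivity, ?_⟩
  intro X _ hhom BT
  obtain ⟨γ⟩ := hhom
  haveI : CompactSpace X := γ.symm.compactSpace
  obtain ⟨p, hp, hinj, hsurj⟩ := exists_cover γ
  haveI : Nonempty X := ⟨p 0⟩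
  set D := Metric.diam (Set.univ : Set X) with hDdef
  have hD : 0 < D := by
    have hne : p 0 ≠ p (1/2) := by
      intro h
      obtain ⟨n, hn⟩ := (hinj 0 (1/2)).mp h
      have h2 : (2*n : ℤ) = (-1 : ℤ) := by
        have : (2*(n:ℝ)) = -1 := by linarith
        exact_mod_cast this
      omega
    calc (0:ℝ) < dist (p 0) (p (1/2)) := dist_pos.mpr hne
      _ ≤ D := dist_le_diam_of_mem isCompact_univ.isBounded (mem_univ _) (mem_univ _)
  set r := 1/(9*C) * D with hrdef
  choose E hEa hEb hEcpt hEconn hEdiam using BT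
  set Es : X → X → Set X := fun a b => E a b ∪ E b a with hEsdef
  have hEsa : ∀ a b, a ∈ Es a b := fun a b => Or.inl (hEa a b)
  have hEsb : ∀ a b, b ∈ Es a b := fun a b => Or.inl (hEb a b)
  have hEscpt : ∀ a b, IsCompact (Es a b) := fun a b => (hEcpt a b).union (hEcpt b a)
  have hEsconn : ∀ a b, IsPreconnected (Es a b) := fun a b =>
    ((hEconn a b).union ⟨a, hEa a b, hEb b a⟩ (hEconn b a)).isPreconnected
  have hEsdiam : ∀ a b, Metric.diam (Es a b) ≤ 2*C*dist a b := by
    intro a b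
    have h0 := Metric.diam_union (hEa a b) (hEb b a)
    have h2 := hEdiam b a
    rw [dist_comm b a] at h2
    have h1 := hEdiam a b
    simp only [dist_self] at h0
    calc Metric.diam (Es a b) ≤ Metric.diam (E a b) + 0 + Metric.diam (E b a) := h0
      _ ≤ 2*C*dist a b := by linarith
  have hEssymm : ∀ a b, Es a b = Es b a := fun a b => Set.union_comm _ _
  have hne_univ : ∀ a b : X, dist a b ≤ r → Es a b ≠ Set.univ := by
    intro a b hd h
    have h1 := hEsdiam a b
    rw [h, ← hDdef] at h1
    have h2 : 2*C*dist a b ≤ 2*C*r := by nlinarith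
    have h3 : 2*C*r = 2/9*D := by rw [hrdef]; field_simp
    linarith
  set wK : Set X → X := fun K => Classical.epsilon fun w => w ∉ K with hwKdef
  set uK : Set X → ℝ := fun K => Classical.epsilon fun u => p u = wK K with huKdef
  have hwKspec : ∀ K : Set X, K ≠ Set.univ → wK K ∉ K := by
    intro K h
    exact Classical.epsilon_spec ((Set.ne_univ_iff_exists_notMem K).mp h)
  have huKspec : ∀ K : Set X, p (uK K) = wK K := fun K => Classical.epsilon_spec (hsurj (wK K))
  set μfun : X → X → X := fun a b =>
    if h : a ≠ b ∧ dist a b ≤ r then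
      (if tauFn p (uK (Es a b)) a < tauFn p (uK (Es a b)) b then a else b)
    else a with hμ
  have hmu_mem : ∀ a b, μfun a b = a ∨ μfun a b = b := by
    intro a b
    rw [hμ]
    dsimp only
    split_ifs
    · exact Or.inl rfl
    · exact Or.inr rfl
    · exact Or.inl rfl
  have hmu_eq : ∀ (a b : X) (u' : ℝ), a ≠ b → dist a b ≤ r → p u' ∉ Es a b →
      μfun a b = if tauFn p u' a < tauFn p u' b then a else b := by
    intro a b u' hab hd hpu
    have hKne := hne_univ a b hd
    have hw := hwKspec _ hKne
    have hu := huKspec (Es a b)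
    have hw2 : p (uK (Es a b)) ∉ Es a b := by rw [hu]; exact hw
    have htrans := circle_order_transfer hp hinj hsurj (hEsconn a b) hw2 hpu (hEsa a b) (hEsb a b)
    rw [hμ]
    dsimp only
    rw [dif_pos ⟨hab, hd⟩]
    by_cases hc : tauFn p (uK (Es a b)) a < tauFn p (uK (Es a b)) b
    · rw [if_pos hc, if_pos (htrans.mp hc)]
    · rw [if_neg hc, if_neg (fun h => hc (htrans.mpr h))]
  refine ⟨μfun, ?_, ?_, ?_⟩
  · -- symmetry
    intro a b hd
    by_cases hab : a = b
    · rw [hab]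
    · have hd' : dist b a ≤ r := by rwa [dist_comm]
      have hKne := hne_univ a b hd
      have hw := hwKspec _ hKne
      have hu := huKspec (Es a b)
      have hw2 : p (uK (Es a b)) ∉ Es a b := by rw [hu]; exact hw
      have e1 := hmu_eq a b (uK (Es a b)) hab hd hw2
      have e2 := hmu_eq b a (uK (Es a b)) (Ne.symm hab) hd' (by rw [← hEssymm a b]; exact hw2)
      rw [e1, e2]
      have hta := tau_spec hinj hsurj (uK (Es a b)) a (fun h => hw2 (h ▸ hEsa a b))
      have htb := tau_spec hinj hsurj (uK (Es a b)) b (fun h => hw2 (h ▸ hEsb a b))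
      have hne : tauFn p (uK (Es a b)) a ≠ tauFn p (uK (Es a b)) b := by
        intro h
        apply hab
        calc a = p (tauFn p (uK (Es a b)) a) := hta.2.symm
          _ = p (tauFn p (uK (Es a b)) b) := by rw [h]
          _ = b := htb.2
      rcases lt_or_gt_of_ne hne with h|h
      · rw [if_pos h, if_neg (not_lt.mpr (le_of_lt h))]
      · rw [if_neg (not_lt.mpr (le_of_lt h)), if_pos h]
  · -- diagonal
    intro a
    rw [hμ]
    dsimp only
    rw [dif_neg]
    intro h
    exact h.1 rfl
  · -- Lipschitz
    intro a b a' b' h1 h2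
    set dd := dist a a' + dist b b' with hdd
    have hdd0 : 0 ≤ dd := by positivity
    have t1 : dist a b' ≤ dist a b + dist b b' := dist_triangle a b b'
    have t2 : dist b a' ≤ dist a b + dist a a' := by
      have := dist_triangle b a a'
      rw [dist_comm b a] at this
      linarith
    by_cases hcase : dist a b ≤ (2*C+3) * dd
    · -- crude case
      have hstep : (2*C+3)*dd + dd ≤ (2*C+5)*dd := by nlinarith
      rcases hmu_mem a b with h|h <;> rcases hmu_mem a' b' with h'|h' <;> rw [h, h']
      · have : dist a a' ≤ dd := by linarith [dist_nonneg (x := b) (y := b')]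
        nlinarith
      · nlinarith [dist_nonneg (x := a) (y := a')]
      · nlinarith [dist_nonneg (x := b) (y := b')]
      · have : dist b b' ≤ dd := by linarith [dist_nonneg (x := a) (y := a')]
        nlinarith
    · push_neg at hcase
      by_cases hδ : dd = 0
      · have ha : dist a a' = 0 := by
          have := dist_nonneg (x := a) (y := a'); have := dist_nonneg (x := b) (y := b'); linarith
        have hb : dist b b' = 0 := by
          have := dist_nonneg (x := a) (y := a'); have := dist_nonneg (x := b) (y := b'); linarith
        rw [dist_eq_zero] at ha hb
        subst ha; subst hb
        simp [dist_self]
        positivity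
      · have hddpos : 0 < dd := lt_of_le_of_ne hdd0 (Ne.symm hδ)
        have hab : a ≠ b := by
          intro h
          rw [h, dist_self] at hcase
          nlinarith
        have hddlt : dd ≤ dist a b := by nlinarith
        have ha'b' : a' ≠ b' := by
          intro h
          subst h
          have : dist a b ≤ dist a a' + dist a' b := dist_triangle a a' b
          rw [dist_comm a' b] at this
          nlinarith
        have ht4 : dist a' b' ≤ dist a a' + dist a b + dist b b' := by
          have := dist_triangle4 a' a b b'
          rw [dist_comm a' a] at this
          linarith
        have hda'b'2 : dist a' b' ≤ 2*dist a b := by linarith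
        set U := ((Es a b ∪ Es a a') ∪ Es b b') ∪ Es a' b' with hU
        have hd1 := Metric.diam_union (hEsa a b) (hEsa a a')
        have hd2 := Metric.diam_union (show b ∈ Es a b ∪ Es a a' from Or.inl (hEsb a b)) (hEsa b b')
        have hd3 := Metric.diam_union
          (show a' ∈ (Es a b ∪ Es a a') ∪ Es b b' from Or.inl (Or.inr (hEsb a a'))) (hEsa a' b')
        simp only [dist_self] at hd1 hd2 hd3
        have hG0 : (0:ℝ) ≤ 2*C := by linarith
        have m1 := mul_le_mul_of_nonneg_left hddlt hG0
        have m2 := mul_le_mul_of_nonneg_left hda'b'2 hG0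
        have h8 : Metric.diam U ≤ 8*C*dist a b := by
          nlinarith [hd1, hd2, hd3, hEsdiam a b, hEsdiam a a', hEsdiam b b', hEsdiam a' b']
        have hwex : ∃ w, w ∉ U := by
          by_contra hcon
          push_neg at hcon
          have hUuniv : U = Set.univ := Set.eq_univ_iff_forall.mpr hcon
          rw [hUuniv, ← hDdef] at h8
          have h9 : 8*C*dist a b ≤ 8*C*r := by nlinarith
          have h10 : 8*C*r = 8/9*D := by rw [hrdef]; field_simp
          linarith
        obtain ⟨w, hwU⟩ := hwex
        obtain ⟨u, hu⟩ := hsurj w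
        have hn1 : p u ∉ Es a b := fun h => hwU (by rw [← hu]; exact Or.inl (Or.inl (Or.inl h)))
        have hnα : p u ∉ Es a a' := fun h => hwU (by rw [← hu]; exact Or.inl (Or.inl (Or.inr h)))
        have hnβ : p u ∉ Es b b' := fun h => hwU (by rw [← hu]; exact Or.inl (Or.inr h))
        have hn2 : p u ∉ Es a' b' := fun h => hwU (by rw [← hu]; exact Or.inr h)
        have e1 := hmu_eq a b u hab h1 hn1
        have e2 := hmu_eq a' b' u ha'b' h2 hn2
        rw [e1, e2]
        have hta := tau_spec hinj hsurj u a (fun h => hn1 (h ▸ hEsa a b))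
        have htb := tau_spec hinj hsurj u b (fun h => hn1 (h ▸ hEsb a b))
        have hta' := tau_spec hinj hsurj u a' (fun h => hn2 (h ▸ hEsa a' b'))
        have htb' := tau_spec hinj hsurj u b' (fun h => hn2 (h ▸ hEsb a' b'))
        have hneab : tauFn p u a ≠ tauFn p u b := by
          intro h; apply hab
          calc a = p (tauFn p u a) := hta.2.symm
            _ = p (tauFn p u b) := by rw [h]
            _ = b := htb.2
        have hnea'b' : tauFn p u a' ≠ tauFn p u b' := by
          intro h; apply ha'b'
          calc a' = p (tauFn p u a') := hta'.2.symm
            _ = p (tauFn p u b') := by rw [h]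
            _ = b' := htb'.2
        have key : ∀ (x y x' y' : X) (K1 K2 : Set X), IsPreconnected K1 → IsPreconnected K2 →
            p u ∉ K1 → p u ∉ K2 → x ∈ K1 → x' ∈ K1 → y ∈ K2 → y' ∈ K2 →
            tauFn p u x < tauFn p u y → tauFn p u y' < tauFn p u x' → y ∈ K1 ∨ x' ∈ K2 := by
          intro x y x' y' K1 K2 hc1 hc2 hq1 hq2 hx hx' hy hy' hlt hlt'
          have hxs := tau_spec hinj hsurj u x (fun h => hq1 (h ▸ hx))
          have hys := tau_spec hinj hsurj u y (fun h => hq2 (h ▸ hy))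
          have hx's := tau_spec hinj hsurj u x' (fun h => hq1 (h ▸ hx'))
          have hy's := tau_spec hinj hsurj u y' (fun h => hq2 (h ▸ hy'))
          rcases le_or_gt (tauFn p u y) (tauFn p u x') with h|h
          · left
            have := circle_between hp hinj hsurj hc1 hxs.1 hx's.1 (le_of_lt hlt) h hq1
              (by rw [hxs.2]; exact hx) (by rw [hx's.2]; exact hx')
            rwa [hys.2] at this
          · right
            have := circle_between hp hinj hsurj hc2 hy's.1 hys.1 (le_of_lt hlt') (le_of_lt h) hq2
              (by rw [hy's.2]; exact hy') (by rw [hys.2]; exact hy)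
            rwa [hx's.2] at this
        by_cases c1 : tauFn p u a < tauFn p u b <;> by_cases c2 : tauFn p u a' < tauFn p u b'
        · rw [if_pos c1, if_pos c2]
          have : dist a a' ≤ dd := by linarith [dist_nonneg (x := b) (y := b')]
          nlinarith
        · exfalso
          have hflip : tauFn p u b' < tauFn p u a' :=
            lt_of_le_of_ne (not_lt.mp c2) (fun h => hnea'b' h.symm)
          rcases key a b a' b' (Es a a') (Es b b') (hEsconn a a') (hEsconn b b') hnα hnβ
            (hEsa a a') (hEsb a a') (hEsa b b') (hEsb b b') c1 hflip with hbin|ha'in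
          · have hq := dist_le_diam_of_mem (hEscpt a a').isBounded (hEsa a a') hbin
            have q1 : dist a b ≤ 2*C*dist a a' := le_trans hq (hEsdiam a a')
            have q2 : dist a a' ≤ dd := by linarith [dist_nonneg (x := b) (y := b')]
            have q3 := mul_le_mul_of_nonneg_left q2 hG0
            nlinarith
          · have hq := dist_le_diam_of_mem (hEscpt b b').isBounded (hEsa b b') ha'in
            have q1 : dist b a' ≤ 2*C*dist b b' := le_trans hq (hEsdiam b b')
            have q2 : dist b b' ≤ dd := by linarith [dist_nonneg (x := a) (y := a')]
            have q3 := mul_le_mul_of_nonneg_left q2 hG0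
            have q4 : dist a b ≤ dist a a' + dist b a' := by
              have := dist_triangle a a' b
              rw [dist_comm a' b] at this
              linarith
            nlinarith
        · exfalso
          have hflip : tauFn p u b < tauFn p u a :=
            lt_of_le_of_ne (not_lt.mp c1) (fun h => hneab h.symm)
          rcases key b a b' a' (Es b b') (Es a a') (hEsconn b b') (hEsconn a a') hnβ hnα
            (hEsa b b') (hEsb b b') (hEsa a a') (hEsb a a') hflip c2 with hain|hb'in
          · have hq := dist_le_diam_of_mem (hEscpt b b').isBounded (hEsa b b') hain
            have q1 : dist b a ≤ 2*C*dist b b' := le_trans hq (hEsdiam b b')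
            rw [dist_comm b a] at q1
            have q2 : dist b b' ≤ dd := by linarith [dist_nonneg (x := a) (y := a')]
            have q3 := mul_le_mul_of_nonneg_left q2 hG0
            nlinarith
          · have hq := dist_le_diam_of_mem (hEscpt a a').isBounded (hEsa a a') hb'in
            have q1 : dist a b' ≤ 2*C*dist a a' := le_trans hq (hEsdiam a a')
            have q2 : dist a a' ≤ dd := by linarith [dist_nonneg (x := b) (y := b')]
            have q3 := mul_le_mul_of_nonneg_left q2 hG0
            have q4 : dist a b ≤ dist a b' + dist b b' := by
              have := dist_triangle a b' b
              rw [dist_comm b' b] at this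
              linarith
            nlinarith
        · rw [if_neg c1, if_neg c2]
          have : dist b b' ≤ dd := by linarith [dist_nonneg (x := a) (y := a')]
          nlinarith
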